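/- Fix real numbers p > 0 and j0 ≥ 0, and let C ∈ ℝ satisfy C² = j0²·p². For n ∈ ℕ set G(n) = sgn(C)·j0·(n+1), F(n) = (j0² + (n+1)² − 1)/2, ε_n = √(p²/(j0² + (n+1)² − 1)), α_j(n) = √((2F(n) + 1 − j² − G(n)²/j²)/((2j+1)(2j−1))), and β_j(n) = G(n)/(j(j+1)). Then for every real j with j > 1/2 and j ≥ j0, and every real m with −j ≤ m ≤ j, the following three limits hold as n → ∞: (i) −ε_n·α_j(n)·√((j+m)(j+m−1)) → −α̃_j·√((j+m)(j+m−1)); (ii) ε_n·β_j(n)·√((j+m)(j−m+1)) → (C/(j(j+1)))·√((j+m)(j−m+1)); (iii) ε_n·α_{j+1}(n)·√((j−m+1)(j−m+2)) → α̃_{j+1}·√((j−m+1)(j−m+2)); where α̃_j = √((p² − C²/j²)/((2j+1)(2j−1))). (These are the limits of the matrix elements of ρ_{F(n),G(n)}(ε_n N₋) in Theorem 1, converging to the matrix elements of η_{p²,C}(P₋).) -/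

import Mathlib

/-- Contraction parameter ε_n = √(p²/(j0² + (n+1)² − 1)). -/
noncomputable def epsSeq (p j0 : ℝ) (n : ℕ) : ℝ :=
  Real.sqrt (p ^ 2 / (j0 ^ 2 + ((n : ℝ) + 1) ^ 2 - 1))

/-- G(n) = sgn(C)·j0·(n+1). -/
noncomputable def Gseq (C j0 : ℝ) (n : ℕ) : ℝ :=
  Real.sign C * j0 * ((n : ℝ) + 1)

/-- F(n) = (j0² + (n+1)² − 1)/2. -/
noncomputable def Fseq (j0 : ℝ) (n : ℕ) : ℝ :=
  (j0 ^ 2 + ((n : ℝ) + 1) ^ 2 - 1) / 2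

/-- α_j(n) = √((2F(n) + 1 − j² − G(n)²/j²)/((2j+1)(2j−1))). -/
noncomputable def alphaSeq (p j0 C j : ℝ) (n : ℕ) : ℝ :=
  Real.sqrt
    ((2 * Fseq j0 n + 1 - j ^ 2 - (Gseq C j0 n) ^ 2 / j ^ 2) /
      ((2 * j + 1) * (2 * j - 1)))

/-- β_j(n) = G(n)/(j(j+1)). -/
noncomputable def betaSeq (C j0 j : ℝ) (n : ℕ) : ℝ :=
  Gseq C j0 n / (j * (j + 1))

/-- α̃_j = √((p² − C²/j²)/((2j+1)(2j−1))). -/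
noncomputable def alphaTilde (p C j : ℝ) : ℝ :=
  Real.sqrt ((p ^ 2 - C ^ 2 / j ^ 2) / ((2 * j + 1) * (2 * j - 1)))

open Filter

lemma D_nonneg (j0 : ℝ) (n : ℕ) : 0 ≤ j0 ^ 2 + ((n : ℝ) + 1) ^ 2 - 1 := by
  have h : (0:ℝ) ≤ (n:ℝ) := Nat.cast_nonneg n
  nlinarith [sq_nonneg j0]

lemma D_tendsto (j0 : ℝ) :
    Tendsto (fun n : ℕ => j0 ^ 2 + ((n : ℝ) + 1) ^ 2 - 1) atTop atTop := by
  have h1 : Tendsto (fun n : ℕ => ((n : ℝ) + 1)) atTop atTop :=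
    tendsto_atTop_add_const_right _ 1 tendsto_natCast_atTop_atTop
  have h2 : Tendsto (fun n : ℕ => ((n : ℝ) + 1) ^ 2) atTop atTop := by
    simpa [pow_two] using h1.atTop_mul_atTop₀ h1
  have h3 := tendsto_atTop_add_const_right atTop (j0 ^ 2 - 1) h2
  refine h3.congr (fun n => by ring)

lemma Dinv_tendsto (j0 : ℝ) :
    Tendsto (fun n : ℕ => (j0 ^ 2 + ((n : ℝ) + 1) ^ 2 - 1)⁻¹) atTop (nhds 0) :=
  (D_tendsto j0).inv_tendsto_atTop

lemma G2_eq (p j0 C : ℝ) (hp : 0 < p) (hC : C ^ 2 = j0 ^ 2 * p ^ 2) (n : ℕ) :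
    (Gseq C j0 n) ^ 2 = j0 ^ 2 * ((n : ℝ) + 1) ^ 2 := by
  rcases eq_or_ne C 0 with h | h
  · have hj0 : j0 = 0 := by
      have h0 : j0 ^ 2 * p ^ 2 = 0 := by rw [← hC, h]; ring
      have h2 : j0 ^ 2 = 0 := by
        rcases mul_eq_zero.mp h0 with h' | h'
        · exact h'
        · exact absurd h' (by positivity)
      exact sq_eq_zero_iff.mp h2
    simp [Gseq, h, hj0]
  · have hs : (Real.sign C) ^ 2 = 1 := by
      rcases lt_or_gt_of_ne h with hlt | hgt
      · rw [Real.sign_of_neg hlt]; norm_num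
      · rw [Real.sign_of_pos hgt]; norm_num
    simp only [Gseq]
    nlinarith [hs]

lemma epsAlpha_tendsto (p j0 C : ℝ) (hp : 0 < p) (hj0 : 0 ≤ j0)
    (hC : C ^ 2 = j0 ^ 2 * p ^ 2) (j : ℝ) (hjne : j ≠ 0) :
    Tendsto (fun n : ℕ => epsSeq p j0 n * alphaSeq p j0 C j n) atTop
      (nhds (alphaTilde p C j)) := by
  set K : ℝ := (2 * j + 1) * (2 * j - 1) with hK
  set D : ℕ → ℝ := fun n => j0 ^ 2 + ((n : ℝ) + 1) ^ 2 - 1 with hD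
  have hfun : ∀ n, epsSeq p j0 n * alphaSeq p j0 C j n =
      Real.sqrt ((p ^ 2 / D n) *
        ((2 * Fseq j0 n + 1 - j ^ 2 - (Gseq C j0 n) ^ 2 / j ^ 2) / K)) := by
    intro n
    rw [epsSeq, alphaSeq, ← Real.sqrt_mul (div_nonneg (sq_nonneg p) (D_nonneg j0 n))]
  have hinner : Tendsto
      (fun n : ℕ => (p ^ 2 / D n) *
        ((2 * Fseq j0 n + 1 - j ^ 2 - (Gseq C j0 n) ^ 2 / j ^ 2) / K)) atTop
      (nhds ((p ^ 2 - C ^ 2 / j ^ 2) / K)) := by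
    have hlim : Tendsto
        (fun n : ℕ => (p ^ 2 * (1 - j0 ^ 2 / j ^ 2)
          - p ^ 2 * (j ^ 2 - 1 + j0 ^ 2 / j ^ 2 * (1 - j0 ^ 2)) * (D n)⁻¹) / K) atTop
        (nhds ((p ^ 2 * (1 - j0 ^ 2 / j ^ 2) - p ^ 2 * (j ^ 2 - 1 + j0 ^ 2 / j ^ 2 * (1 - j0 ^ 2)) * 0) / K)) := by
      exact (tendsto_const_nhds.sub (tendsto_const_nhds.mul (Dinv_tendsto j0))).div_const K
    have heq : (p ^ 2 * (1 - j0 ^ 2 / j ^ 2) - p ^ 2 * (j ^ 2 - 1 + j0 ^ 2 / j ^ 2 * (1 - j0 ^ 2)) * 0) / K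
        = (p ^ 2 - C ^ 2 / j ^ 2) / K := by
      rw [hC]; congr 1; field_simp; ring
    rw [heq] at hlim
    refine hlim.congr' ?_
    filter_upwards [eventually_ge_atTop 1] with n hn
    have hn' : (1:ℝ) ≤ (n:ℝ) := by exact_mod_cast hn
    have hDpos : 0 < D n := by simp only [hD]; nlinarith [sq_nonneg j0]
    have hG2 := G2_eq p j0 C hp hC n
    have h2F : 2 * Fseq j0 n + 1 = j0 ^ 2 + ((n : ℝ) + 1) ^ 2 := by
      simp only [Fseq]; ring
    rw [h2F, hG2]
    have hn1 : ((n:ℝ) + 1) ^ 2 = D n - j0 ^ 2 + 1 := by simp only [hD]; ring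
    rw [hn1, ← mul_div_assoc]
    congr 1
    field_simp
    ring
  refine Tendsto.congr (fun n => (hfun n).symm) ?_
  exact hinner.sqrt

lemma epsG_tendsto (p j0 C : ℝ) (hp : 0 < p) (hj0 : 0 ≤ j0)
    (hC : C ^ 2 = j0 ^ 2 * p ^ 2) :
    Tendsto (fun n : ℕ => epsSeq p j0 n * Gseq C j0 n) atTop (nhds C) := by
  set D : ℕ → ℝ := fun n => j0 ^ 2 + ((n : ℝ) + 1) ^ 2 - 1 with hD
  have hfun : ∀ n, epsSeq p j0 n * Gseq C j0 n =
      Real.sign C * j0 * Real.sqrt (((n:ℝ)+1)^2 * (p ^ 2 / D n)) := by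
    intro n
    rw [epsSeq, Gseq, Real.sqrt_mul (sq_nonneg _), Real.sqrt_sq (by positivity : (0:ℝ) ≤ (n:ℝ)+1)]
    ring
  have hinner : Tendsto (fun n : ℕ => ((n:ℝ)+1)^2 * (p ^ 2 / D n)) atTop (nhds (p^2)) := by
    have hlim : Tendsto (fun n : ℕ => p ^ 2 - (j0^2 - 1) * p^2 * (D n)⁻¹) atTop
        (nhds (p ^ 2 - (j0^2-1)*p^2 * 0)) :=
      tendsto_const_nhds.sub (tendsto_const_nhds.mul (Dinv_tendsto j0))
    rw [show p ^ 2 - (j0^2-1)*p^2 * 0 = p^2 by ring] at hlim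
    refine hlim.congr' ?_
    filter_upwards [eventually_ge_atTop 1] with n hn
    have hn' : (1:ℝ) ≤ (n:ℝ) := by exact_mod_cast hn
    have hDpos : 0 < D n := by simp only [hD]; nlinarith [sq_nonneg j0]
    have hn1 : ((n:ℝ) + 1) ^ 2 = D n - j0 ^ 2 + 1 := by simp only [hD]; ring
    rw [hn1]
    field_simp
    ring
  have hsq : Tendsto (fun n : ℕ => Real.sign C * j0 * Real.sqrt (((n:ℝ)+1)^2 * (p ^ 2 / D n)))
      atTop (nhds (Real.sign C * j0 * p)) := by
    have := hinner.sqrt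
    rw [Real.sqrt_sq hp.le] at this
    exact tendsto_const_nhds.mul this
  have hval : Real.sign C * j0 * p = C := by
    rcases lt_trichotomy C 0 with h | h | h
    · rw [Real.sign_of_neg h]
      have : j0 * p = -C := by
        nlinarith [abs_nonneg C, sq_abs C, mul_nonneg hj0 hp.le]
      linarith [this]
    · have hj00 : j0 = 0 := by
        have h0 : j0 ^ 2 * p ^ 2 = 0 := by rw [← hC, h]; ring
        have h2 : j0 ^ 2 = 0 := by
          rcases mul_eq_zero.mp h0 with h' | h'
          · exact h'
          · exact absurd h' (by positivity)
        exact sq_eq_zero_iff.mp h2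
      simp [h, hj00]
    · rw [Real.sign_of_pos h]
      have : j0 * p = C := by
        nlinarith [mul_nonneg hj0 hp.le]
      linarith [this]
  have hfin := Tendsto.congr (fun n => (hfun n).symm) hsq
  rwa [hval] at hfin

/- STATEMENT 4: convergence of the three matrix elements of ρ_{F(n),G(n)}(ε_n N₋)
   to those of η_{p²,C}(P₋). -/
theorem contraction_Nminus_matrix_elements (p j0 C : ℝ) (hp : 0 < p) (hj0 : 0 ≤ j0)
    (hC : C ^ 2 = j0 ^ 2 * p ^ 2) (j : ℝ) (hj : 1 / 2 < j) (hjj0 : j0 ≤ j)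
    (m : ℝ) (hm1 : -j ≤ m) (hm2 : m ≤ j) :
    Filter.Tendsto
        (fun n : ℕ => -(epsSeq p j0 n * alphaSeq p j0 C j n *
          Real.sqrt ((j + m) * (j + m - 1))))
        Filter.atTop (nhds (-(alphaTilde p C j * Real.sqrt ((j + m) * (j + m - 1))))) ∧
    Filter.Tendsto
        (fun n : ℕ => epsSeq p j0 n * betaSeq C j0 j n *
          Real.sqrt ((j + m) * (j - m + 1)))
        Filter.atTop (nhds (C / (j * (j + 1)) * Real.sqrt ((j + m) * (j - m + 1)))) ∧
    Filter.Tendsto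
        (fun n : ℕ => epsSeq p j0 n * alphaSeq p j0 C (j + 1) n *
          Real.sqrt ((j - m + 1) * (j - m + 2)))
        Filter.atTop
        (nhds (alphaTilde p C (j + 1) * Real.sqrt ((j - m + 1) * (j - m + 2)))) := by
  have hj1 : j ≠ 0 := by intro h; rw [h] at hj; norm_num at hj
  have hj2 : j + 1 ≠ 0 := by intro h; nlinarith
  have hA := epsAlpha_tendsto p j0 C hp hj0 hC j hj1
  have hA' := epsAlpha_tendsto p j0 C hp hj0 hC (j + 1) hj2
  have hG := epsG_tendsto p j0 C hp hj0 hC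
  refine ⟨(hA.mul_const _).neg, ?_, hA'.mul_const _⟩
  have hB : Filter.Tendsto (fun n : ℕ => epsSeq p j0 n * betaSeq C j0 j n)
      Filter.atTop (nhds (C / (j * (j + 1)))) :=
    (hG.div_const (j * (j + 1))).congr (fun n => by rw [betaSeq, mul_div_assoc])
  exact hB.mul_const _
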